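/- The 3⊗3 Tiles UPB state ρ = (1/4)(I_9 − Σ_{i=1}^4 |ψ_i⟩⟨ψ_i| − |S⟩⟨S|), with ψ_1 = |0⟩(|0⟩−|1⟩)/√2, ψ_2 = |2⟩(|1⟩−|2⟩)/√2, ψ_3 = (|0⟩−|1⟩)|2⟩/√2, ψ_4 = (|1⟩−|2⟩)|0⟩/√2, S = (1/3)(|0⟩+|1⟩+|2⟩)(|0⟩+|1⟩+|2⟩), is entangled. -/

import Mathlib

open Matrix BigOperators Kronecker
open scoped ComplexOrder

/-- The rank-one projector `|v⟩⟨v|`. -/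
noncomputable def dyad {α : Type*} [Fintype α] (v : α → ℂ) : Matrix α α ℂ :=
  Matrix.vecMulVec v (star v)

/-- Partial trace over the second tensor factor. -/
noncomputable def ptraceB {m n : ℕ} (ρ : Matrix (Fin m × Fin n) (Fin m × Fin n) ℂ) :
    Matrix (Fin m) (Fin m) ℂ := fun i j => ∑ k : Fin n, ρ (i, k) (j, k)

/-- Partial trace over the first tensor factor. -/
noncomputable def ptraceA {m n : ℕ} (ρ : Matrix (Fin m × Fin n) (Fin m × Fin n) ℂ) :
    Matrix (Fin n) (Fin n) ℂ := fun i j => ∑ k : Fin m, ρ (k, i) (k, j)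

/-- A bipartite state is separable if it is a finite convex combination of
tensor products of density matrices. -/
def SepState {m n : ℕ} (ρ : Matrix (Fin m × Fin n) (Fin m × Fin n) ℂ) : Prop :=
  ∃ (d : ℕ) (q : Fin d → ℝ) (σ : Fin d → Matrix (Fin m) (Fin m) ℂ)
    (τ : Fin d → Matrix (Fin n) (Fin n) ℂ),
    (∀ i, 0 ≤ q i) ∧ (∑ i, q i = 1) ∧
    (∀ i, (σ i).PosSemidef ∧ (σ i).trace = 1) ∧
    (∀ i, (τ i).PosSemidef ∧ (τ i).trace = 1) ∧
    ρ = ∑ i, (q i : ℂ) • (σ i ⊗ₖ τ i)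

open Classical in
/-- Eigenvalues of a Hermitian matrix arranged in non-increasing order
(`eigsDesc A 0` is the largest eigenvalue); junk value otherwise. -/
noncomputable def eigsDesc {k : ℕ} (A : Matrix (Fin k) (Fin k) ℂ) : Fin k → ℝ :=
  if h : A.IsHermitian then fun i => (h.eigenvalues ∘ Tuple.sort h.eigenvalues) i.rev
  else fun _ => 0

/-- The `i`-th largest singular value of an `m × n` complex matrix,
`i : Fin (min m n)`. -/
noncomputable def singVal {m n : ℕ} (A : Matrix (Fin m) (Fin n) ℂ) (i : Fin (min m n)) : ℝ :=
  Real.sqrt (eigsDesc (Aᴴ * A) (Fin.castLE (min_le_right m n) i))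

open Classical in
/-- The largest eigenvalue of a Hermitian matrix; junk value otherwise. -/
noncomputable def lamMax {α : Type*} [Fintype α] [DecidableEq α] (A : Matrix α α ℂ) : ℝ :=
  if h : A.IsHermitian then ⨆ i, h.eigenvalues i else 0

/-- Frobenius (Hilbert–Schmidt) norm of a matrix. -/
noncomputable def frobNorm {m n : ℕ} (A : Matrix (Fin m) (Fin n) ℂ) : ℝ :=
  Real.sqrt ((Aᴴ * A).trace.re)

noncomputable def upb1 : Fin 3 × Fin 3 → ℂ := fun x =>
  if x = (0, 0) then ((Real.sqrt 2 : ℝ) : ℂ)⁻¹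
  else if x = (0, 1) then -((Real.sqrt 2 : ℝ) : ℂ)⁻¹ else 0

noncomputable def upb2 : Fin 3 × Fin 3 → ℂ := fun x =>
  if x = (2, 1) then ((Real.sqrt 2 : ℝ) : ℂ)⁻¹
  else if x = (2, 2) then -((Real.sqrt 2 : ℝ) : ℂ)⁻¹ else 0

noncomputable def upb3 : Fin 3 × Fin 3 → ℂ := fun x =>
  if x = (0, 2) then ((Real.sqrt 2 : ℝ) : ℂ)⁻¹
  else if x = (1, 2) then -((Real.sqrt 2 : ℝ) : ℂ)⁻¹ else 0

noncomputable def upb4 : Fin 3 × Fin 3 → ℂ := fun x =>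
  if x = (1, 0) then ((Real.sqrt 2 : ℝ) : ℂ)⁻¹
  else if x = (2, 0) then -((Real.sqrt 2 : ℝ) : ℂ)⁻¹ else 0

noncomputable def upbS : Fin 3 × Fin 3 → ℂ := fun _ => (1 / 3 : ℂ)

/- ### Auxiliary material for the proof -/

/-- Quadratic form `⟨v, M v⟩`. -/
noncomputable def qd {α : Type*} [Fintype α] (M : Matrix α α ℂ) (v : α → ℂ) : ℂ :=
  star v ⬝ᵥ M.mulVec v

lemma qd_add {α : Type*} [Fintype α] (A B : Matrix α α ℂ) (v : α → ℂ) :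
    qd (A + B) v = qd A v + qd B v := by
  simp [qd, Matrix.add_mulVec, dotProduct_add]

lemma qd_sub {α : Type*} [Fintype α] (A B : Matrix α α ℂ) (v : α → ℂ) :
    qd (A - B) v = qd A v - qd B v := by
  simp [qd, Matrix.sub_mulVec, dotProduct_sub]

lemma qd_smul {α : Type*} [Fintype α] (c : ℂ) (A : Matrix α α ℂ) (v : α → ℂ) :
    qd (c • A) v = c * qd A v := by
  simp [qd, Matrix.smul_mulVec, dotProduct_smul, smul_eq_mul]

lemma qd_one {α : Type*} [Fintype α] [DecidableEq α] (v : α → ℂ) :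
    qd 1 v = star v ⬝ᵥ v := by
  simp [qd, Matrix.one_mulVec]

lemma qd_sum {α : Type*} [Fintype α] {d : ℕ} (f : Fin d → Matrix α α ℂ) (v : α → ℂ) :
    qd (∑ i, f i) v = ∑ i, qd (f i) v := by
  have h1 : (∑ i, f i) *ᵥ v = ∑ i, f i *ᵥ v := by
    ext x
    simp only [Matrix.mulVec, dotProduct, Matrix.sum_apply, Finset.sum_apply,
      Finset.sum_mul]
    exact Finset.sum_comm
  have h2 : star v ⬝ᵥ (∑ i, f i *ᵥ v) = ∑ i, star v ⬝ᵥ (f i *ᵥ v) := by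
    simp only [dotProduct, Finset.sum_apply, Finset.mul_sum]
    exact Finset.sum_comm
  simp [qd, h1, h2]

lemma qd_dyad {α : Type*} [Fintype α] (u v : α → ℂ) :
    qd (dyad u) v = star (star u ⬝ᵥ v) * (star u ⬝ᵥ v) := by
  simp only [qd, dyad, Matrix.mulVec, dotProduct, Matrix.vecMulVec_apply, star_sum,
    star_mul', star_star, Pi.star_apply]
  rw [Finset.sum_mul_sum]
  refine Finset.sum_congr rfl fun x _ => ?_
  rw [Finset.mul_sum]
  refine Finset.sum_congr rfl fun y _ => ?_
  ring

/-- Elementary tensor of two vectors. -/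
noncomputable def tp (a b : Fin 3 → ℂ) : Fin 3 × Fin 3 → ℂ := fun x => a x.1 * b x.2

lemma qd_kron (σ τ : Matrix (Fin 3) (Fin 3) ℂ) (a b : Fin 3 → ℂ) :
    qd (σ ⊗ₖ τ) (tp a b) = qd σ a * qd τ b := by
  simp only [qd, tp, Matrix.mulVec, dotProduct, Matrix.kroneckerMap_apply,
    Fintype.sum_prod_type, Pi.star_apply, star_mul', Fin.sum_univ_three]
  ring

def ve0 : Fin 3 → ℂ := ![1,0,0]
def ve2 : Fin 3 → ℂ := ![0,0,1]
def vd01 : Fin 3 → ℂ := ![1,-1,0]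
def vd12 : Fin 3 → ℂ := ![0,1,-1]
def vs : Fin 3 → ℂ := ![1,1,1]
def V5 : Fin 5 → (Fin 3 → ℂ) := ![ve0, ve2, vd01, vd12, vs]
def pp5 : Fin 5 → Fin 5 := ![2,3,1,0,4]

lemma dyad_smul' (c : ℂ) (v : Fin 3 × Fin 3 → ℂ) :
    dyad (c • v) = (c * star c) • dyad v := by
  ext i j
  simp [dyad, Matrix.vecMulVec_apply, star_mul']
  ring

lemma star_sqrt2_inv : star ((((Real.sqrt 2 : ℝ) : ℂ))⁻¹) = (((Real.sqrt 2 : ℝ) : ℂ))⁻¹ := by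
  simp [Complex.star_def, map_inv₀, Complex.conj_ofReal]

lemma sqrt2_sq : ((((Real.sqrt 2 : ℝ) : ℂ))⁻¹ * star (((Real.sqrt 2 : ℝ) : ℂ))⁻¹) = (2:ℂ)⁻¹ := by
  rw [star_sqrt2_inv, ← mul_inv, ← Complex.ofReal_mul, Real.mul_self_sqrt (by norm_num)]
  norm_num

lemma dyad_upb1 : dyad upb1 = (2:ℂ)⁻¹ • dyad (tp ve0 vd01) := by
  rw [show upb1 = (((Real.sqrt 2 : ℝ) : ℂ))⁻¹ • tp ve0 vd01 from by
    funext x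
    fin_cases x <;> norm_num [upb1, tp, ve0, vd01, Prod.ext_iff, Fin.ext_iff]]
  rw [dyad_smul', sqrt2_sq]

lemma dyad_upb2 : dyad upb2 = (2:ℂ)⁻¹ • dyad (tp ve2 vd12) := by
  rw [show upb2 = (((Real.sqrt 2 : ℝ) : ℂ))⁻¹ • tp ve2 vd12 from by
    funext x
    fin_cases x <;> norm_num [upb2, tp, ve2, vd12, Prod.ext_iff, Fin.ext_iff]]
  rw [dyad_smul', sqrt2_sq]

lemma dyad_upb3 : dyad upb3 = (2:ℂ)⁻¹ • dyad (tp vd01 ve2) := by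
  rw [show upb3 = (((Real.sqrt 2 : ℝ) : ℂ))⁻¹ • tp vd01 ve2 from by
    funext x
    fin_cases x <;> norm_num [upb3, tp, vd01, ve2, Prod.ext_iff, Fin.ext_iff]]
  rw [dyad_smul', sqrt2_sq]

lemma dyad_upb4 : dyad upb4 = (2:ℂ)⁻¹ • dyad (tp vd12 ve0) := by
  rw [show upb4 = (((Real.sqrt 2 : ℝ) : ℂ))⁻¹ • tp vd12 ve0 from by
    funext x
    fin_cases x <;> norm_num [upb4, tp, vd12, ve0, Prod.ext_iff, Fin.ext_iff]]
  rw [dyad_smul', sqrt2_sq]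

lemma dyad_upbS : dyad upbS = ((9:ℂ))⁻¹ • dyad (tp vs vs) := by
  rw [show upbS = (3:ℂ)⁻¹ • tp vs vs from by
    funext x
    fin_cases x <;> norm_num [upbS, tp, vs]]
  rw [dyad_smul', show star ((3:ℂ)⁻¹) = (3:ℂ)⁻¹ from by simp]
  norm_num

lemma zero_of_cols (M : Matrix (Fin 3) (Fin 3) ℂ) (u v w : Fin 3 → ℂ)
    (hdet : (Matrix.of ![u,v,w]).det ≠ 0)
    (hu : M.mulVec u = 0) (hv : M.mulVec v = 0) (hw : M.mulVec w = 0) : M = 0 := by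
  set N : Matrix (Fin 3) (Fin 3) ℂ := (Matrix.of ![u,v,w])ᵀ with hN
  have hdet' : IsUnit N.det := by
    rw [hN, Matrix.det_transpose]; exact isUnit_iff_ne_zero.2 hdet
  have hMN : M * N = 0 := by
    ext i k
    have hcol : (M * N) i k = M.mulVec (fun j => N j k) i := by
      simp [Matrix.mul_apply, Matrix.mulVec, dotProduct]
    rw [hcol]
    fin_cases k
    · exact congrFun hu i
    · exact congrFun hv i
    · exact congrFun hw i
  calc M = M * (N * N⁻¹) := by rw [Matrix.mul_nonsing_inv N hdet', mul_one]
  _ = (M * N) * N⁻¹ := by rw [mul_assoc]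
  _ = 0 := by rw [hMN, zero_mul]

lemma kill3 (M : Matrix (Fin 3) (Fin 3) ℂ) (i j k : Fin 5)
    (hij : i ≠ j) (hik : i ≠ k) (hjk : j ≠ k)
    (h1 : M.mulVec (V5 i) = 0) (h2 : M.mulVec (V5 j) = 0) (h3 : M.mulVec (V5 k) = 0) :
    M = 0 := by
  fin_cases i <;> fin_cases j <;> fin_cases k <;>
    first
      | exact absurd rfl (by assumption)
      | exact zero_of_cols M _ _ _
          (by simp [V5, Matrix.det_fin_three, ve0, ve2, vd01, vd12, vs,
            Matrix.vecHead, Matrix.vecTail] <;> norm_num) h1 h2 h3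

/-- The `3 ⊗ 3` Tiles UPB bound-entangled state is entangled. -/
theorem stmt16 :
    ¬ SepState ((1 / 4 : ℂ) •
      ((1 : Matrix (Fin 3 × Fin 3) (Fin 3 × Fin 3) ℂ) -
        (dyad upb1 + dyad upb2 + dyad upb3 + dyad upb4) - dyad upbS)) := by
  rintro ⟨d, q, σ, τ, hq0, hq1, hσ, hτ, hρ⟩
  classical
  -- an index with positive weight
  obtain ⟨i0, hi0⟩ : ∃ i, 0 < q i := by
    by_contra h
    push_neg at h
    have hz : ∑ i, q i = 0 :=
      Finset.sum_eq_zero fun i _ => le_antisymm (h i) (hq0 i)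
    rw [hq1] at hz
    norm_num at hz
  -- the quadratic form of ρ vanishes on each (unnormalized) tile vector
  have hL : ∀ j : Fin 5,
      qd ((1 / 4 : ℂ) •
        ((1 : Matrix (Fin 3 × Fin 3) (Fin 3 × Fin 3) ℂ) -
          (dyad upb1 + dyad upb2 + dyad upb3 + dyad upb4) - dyad upbS))
        (tp (V5 j) (V5 (pp5 j))) = 0 := by
    intro j
    rw [dyad_upb1, dyad_upb2, dyad_upb3, dyad_upb4, dyad_upbS]
    simp only [qd_smul, qd_sub, qd_add, qd_one, qd_dyad]
    fin_cases j <;>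
      simp [V5, pp5, tp, ve0, ve2, vd01, vd12, vs, dotProduct,
        Fintype.sum_prod_type, Fin.sum_univ_three, Matrix.vecHead, Matrix.vecTail,
        Complex.star_def] <;> norm_num
  -- for each tile, σ i0 kills the A-factor or τ i0 kills the B-factor
  have key : ∀ j : Fin 5,
      (σ i0).mulVec (V5 j) = 0 ∨ (τ i0).mulVec (V5 (pp5 j)) = 0 := by
    intro j
    have hq := congrArg (fun M => qd M (tp (V5 j) (V5 (pp5 j)))) hρ
    rw [hL j, qd_sum] at hq
    have hnn : ∀ i : Fin d, i ∈ Finset.univ →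
        (0:ℂ) ≤ qd ((q i : ℂ) • (σ i ⊗ₖ τ i)) (tp (V5 j) (V5 (pp5 j))) := by
      intro i _
      rw [qd_smul, qd_kron]
      have h1 : (0:ℂ) ≤ (q i : ℂ) := by
        rw [show ((0:ℂ) = ((0:ℝ):ℂ)) from by norm_num]
        exact_mod_cast hq0 i
      have h2 : (0:ℂ) ≤ qd (σ i) (V5 j) := (hσ i).1.dotProduct_mulVec_nonneg _
      have h3 : (0:ℂ) ≤ qd (τ i) (V5 (pp5 j)) := (hτ i).1.dotProduct_mulVec_nonneg _
      exact mul_nonneg h1 (mul_nonneg h2 h3)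
    have hall := (Finset.sum_eq_zero_iff_of_nonneg hnn).1 hq.symm i0 (Finset.mem_univ _)
    rw [qd_smul, qd_kron] at hall
    have hq0' : (q i0 : ℂ) ≠ 0 := by
      exact_mod_cast (ne_of_gt hi0)
    have hprod : qd (σ i0) (V5 j) * qd (τ i0) (V5 (pp5 j)) = 0 := by
      rcases mul_eq_zero.1 hall with h | h
      · exact absurd h hq0'
      · exact h
    rcases mul_eq_zero.1 hprod with h | h
    · exact Or.inl (((hσ i0).1.dotProduct_mulVec_zero_iff _).1 h)
    · exact Or.inr (((hτ i0).1.dotProduct_mulVec_zero_iff _).1 h)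
  -- counting argument: one of σ i0, τ i0 kills three independent vectors
  set P : Finset (Fin 5) := Finset.univ.filter (fun j => (σ i0).mulVec (V5 j) = 0) with hP
  set Q : Finset (Fin 5) := Finset.univ.filter (fun j => (τ i0).mulVec (V5 (pp5 j)) = 0)
    with hQ
  have hunion : P ∪ Q = Finset.univ := by
    apply Finset.eq_univ_iff_forall.2
    intro j
    rcases key j with h | h
    · exact Finset.mem_union_left _ (Finset.mem_filter.2 ⟨Finset.mem_univ _, h⟩)
    · exact Finset.mem_union_right _ (Finset.mem_filter.2 ⟨Finset.mem_univ _, h⟩)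
  have hcard : 5 ≤ P.card + Q.card := by
    have h1 := Finset.card_union_le P Q
    rw [hunion] at h1
    simpa using h1
  have hppinj : Function.Injective pp5 := by decide
  rcases (by omega : 2 < P.card ∨ 2 < Q.card) with h | h
  · obtain ⟨a, b, c, ha, hb, hc, hab, hac, hbc⟩ := Finset.two_lt_card_iff.1 h
    have hz : σ i0 = 0 :=
      kill3 (σ i0) a b c hab hac hbc
        (Finset.mem_filter.1 ha).2 (Finset.mem_filter.1 hb).2 (Finset.mem_filter.1 hc).2
    have ht := (hσ i0).2
    rw [hz, Matrix.trace_zero] at ht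
    norm_num at ht
  · obtain ⟨a, b, c, ha, hb, hc, hab, hac, hbc⟩ := Finset.two_lt_card_iff.1 h
    have hz : τ i0 = 0 :=
      kill3 (τ i0) (pp5 a) (pp5 b) (pp5 c)
        (fun e => hab (hppinj e)) (fun e => hac (hppinj e)) (fun e => hbc (hppinj e))
        (Finset.mem_filter.1 ha).2 (Finset.mem_filter.1 hb).2 (Finset.mem_filter.1 hc).2
    have ht := (hτ i0).2
    rw [hz, Matrix.trace_zero] at ht
    norm_num at ht
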